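/- Let m be a closed and coherent DBM of dimension 2n. Then Strengthen(m) is strongly closed; that is, writing m' = Strengthen(m), one has m'[i,i] = 0 for all i, m'[i,j] ≤ m'[i,k] + m'[k,j] for all i,j,k, and m'[i,j] ≤ m'[i,ī]/2 + m'[j̄,j]/2 for all i,j. -/

import Mathlib

namespace Octagon

/-- A DBM of dimension `2*n` with entries in `ℚ ∪ {+∞}`. -/
abbrev DBM (n : ℕ) : Type := Fin (2 * n) → Fin (2 * n) → WithTop ℚ

/-- `bar i = i + 1` if `i` is even, `i - 1` if `i` is odd. -/
def bar {n : ℕ} (i : Fin (2 * n)) : Fin (2 * n) :=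
  if h : (i : ℕ) % 2 = 0 then ⟨(i : ℕ) + 1, by have := i.isLt; omega⟩
  else ⟨(i : ℕ) - 1, by have := i.isLt; omega⟩

/-- A DBM is closed iff its diagonal is zero and it satisfies the triangle inequality. -/
def Closed {n : ℕ} (m : DBM n) : Prop :=
  (∀ i, m i i = 0) ∧ ∀ i j k, m i j ≤ m i k + m k j

/-- A DBM is consistent iff its diagonal entries are nonnegative. -/
def Consistent {n : ℕ} (m : DBM n) : Prop :=
  ∀ i, 0 ≤ m i i

/-- A DBM is coherent iff `m[i,j] = m[bar j, bar i]` for all `i, j`. -/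
def Coherent {n : ℕ} (m : DBM n) : Prop :=
  ∀ i j, m i j = m (bar j) (bar i)

/-- Incremental closure of `m` with the new constraint `x'_a - x'_b ≤ d`. -/
def IncClose {n : ℕ} (m : DBM n) (a b : Fin (2 * n)) (d : ℚ) : DBM n :=
  fun i j =>
    min (m i j) <|
    min (m i a + (d : WithTop ℚ) + m b j) <|
    min (m i (bar b) + (d : WithTop ℚ) + m (bar a) j) <|
    min (m i (bar b) + (d : WithTop ℚ) + m (bar a) a + (d : WithTop ℚ) + m b j)
        (m i a + (d : WithTop ℚ) + m b (bar b) + (d : WithTop ℚ) + m (bar a) j)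

/-- Halving on `ℚ ∪ {+∞}`, mapping `+∞` to `+∞`. -/
def halve : WithTop ℚ → WithTop ℚ := WithTop.map (fun x => x / 2)

/-- Strengthening of a DBM. -/
def Strengthen {n : ℕ} (m : DBM n) : DBM n :=
  fun i j => min (m i j) (halve (m i (bar i) + m (bar j) j))

lemma halve_add (a b : WithTop ℚ) : halve (a + b) = halve a + halve b := by
  unfold halve
  induction a using WithTop.recTopCoe <;> induction b using WithTop.recTopCoe <;>
    simp [← WithTop.coe_add] <;> ring

lemma halve_mono {a b : WithTop ℚ} (h : a ≤ b) : halve a ≤ halve b := by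
  unfold halve
  induction a using WithTop.recTopCoe <;> induction b using WithTop.recTopCoe <;>
    simp_all [WithTop.coe_le_coe] <;> linarith

lemma halve_add_self (a : WithTop ℚ) : halve (a + a) = a := by
  unfold halve
  induction a using WithTop.recTopCoe <;> simp [← WithTop.coe_add] <;> ring_nf

lemma halve_nonneg {a : WithTop ℚ} (h : 0 ≤ a) : 0 ≤ halve a := by
  have := halve_mono h
  simpa [halve] using this

lemma bar_bar {n : ℕ} (i : Fin (2 * n)) : bar (bar i) = i := by
  unfold bar
  rcases Nat.even_or_odd (i : ℕ) with h | h <;>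
    · simp only [Fin.ext_iff]
      have := i.isLt
      rcases h with ⟨c, hc⟩ <;> split <;> simp_all <;> split <;> simp_all <;> omega

/-- Theorem: strengthening a closed coherent DBM yields a strongly closed DBM. -/
theorem strengthen_stronglyClosed {n : ℕ} (m : DBM n) (hcl : Closed m)
    (hcoh : Coherent m) (m' : DBM n) (hm' : m' = Strengthen m) :
    (∀ i, m' i i = 0) ∧
    (∀ i j k, m' i j ≤ m' i k + m' k j) ∧
    (∀ i j, m' i j ≤ halve (m' i (bar i)) + halve (m' (bar j) j)) := by
  obtain ⟨hdiag, htri⟩ := hcl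
  subst hm'
  have hbarm' : ∀ i, Strengthen m i (bar i) = m i (bar i) := by
    intro i
    simp [Strengthen, bar_bar, halve_add_self]
  refine ⟨?_, ?_, ?_⟩
  · intro i
    have h0 : (0 : WithTop ℚ) ≤ m i (bar i) + m (bar i) i := by
      have := htri i i (bar i); rwa [hdiag i] at this
    simp [Strengthen, hdiag i, min_eq_left (halve_nonneg h0)]
  · intro i j k
    -- key inequalities
    have KB : m i (bar i) ≤ (m i k + m i k) + m k (bar k) := by
      have h1 : m i (bar i) ≤ m i k + m k (bar i) := htri _ _ _
      have h2 : m k (bar i) ≤ m k (bar k) + m (bar k) (bar i) := htri _ _ _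
      have h3 : m (bar k) (bar i) = m i k := by rw [hcoh i k]
      calc m i (bar i) ≤ m i k + (m k (bar k) + m (bar k) (bar i)) :=
            le_trans h1 (add_le_add_right h2 _)
        _ = (m i k + m i k) + m k (bar k) := by rw [h3]; abel
    have KC : m (bar j) j ≤ m (bar k) k + (m k j + m k j) := by
      have h1 : m (bar j) j ≤ m (bar j) k + m k j := htri _ _ _
      have h2 : m (bar j) k ≤ m (bar j) (bar k) + m (bar k) k := htri _ _ _
      have h3 : m (bar j) (bar k) = m k j := (hcoh k j).symm
      calc m (bar j) j ≤ (m (bar j) (bar k) + m (bar k) k) + m k j :=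
            le_trans h1 (add_le_add_left h2 _)
        _ = m (bar k) k + (m k j + m k j) := by rw [h3]; abel
    have harm2 : Strengthen m i j ≤ halve (m i (bar i)) + halve (m (bar j) j) := by
      rw [← halve_add]; exact min_le_right _ _
    have hK0 : (0 : WithTop ℚ) ≤ halve (m (bar k) k) + halve (m k (bar k)) := by
      rw [← halve_add]
      refine halve_nonneg ?_
      have := htri (bar k) (bar k) k; rwa [hdiag (bar k)] at this
    rcases min_cases (m i k) (halve (m i (bar i) + m (bar k) k)) with ⟨e1, _⟩ | ⟨e1, _⟩ <;>
    rcases min_cases (m k j) (halve (m k (bar k) + m (bar j) j)) with ⟨e2, _⟩ | ⟨e2, _⟩ <;>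
      simp only [Strengthen] <;> rw [e1, e2]
    · exact le_trans (min_le_left _ _) (htri i j k)
    · -- m i k + halve(m k k̄ + m j̄ j)
      calc min (m i j) (halve (m i (bar i) + m (bar j) j))
          ≤ halve (m i (bar i)) + halve (m (bar j) j) := harm2
        _ ≤ (m i k + halve (m k (bar k))) + halve (m (bar j) j) := by
            refine add_le_add_left ?_ _
            have := halve_mono KB
            rwa [halve_add, halve_add_self] at this
        _ = m i k + halve (m k (bar k) + m (bar j) j) := by rw [halve_add]; abel
    · calc min (m i j) (halve (m i (bar i) + m (bar j) j))
          ≤ halve (m i (bar i)) + halve (m (bar j) j) := harm2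
        _ ≤ halve (m i (bar i)) + (halve (m (bar k) k) + m k j) := by
            refine add_le_add_right ?_ _
            have := halve_mono KC
            rwa [halve_add, halve_add_self] at this
        _ = halve (m i (bar i) + m (bar k) k) + m k j := by rw [halve_add]; abel
    · calc min (m i j) (halve (m i (bar i) + m (bar j) j))
          ≤ halve (m i (bar i)) + halve (m (bar j) j) := harm2
        _ ≤ (halve (m i (bar i)) + halve (m (bar j) j)) +
            (halve (m (bar k) k) + halve (m k (bar k))) := le_add_of_nonneg_right hK0
        _ = halve (m i (bar i) + m (bar k) k) + halve (m k (bar k) + m (bar j) j) := by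
            rw [halve_add, halve_add]; abel
  · intro i j
    rw [hbarm' i]
    have hj : Strengthen m (bar j) j = m (bar j) j := by
      have := hbarm' (bar j); rwa [bar_bar] at this
    rw [hj, ← halve_add]
    exact min_le_right _ _

end Octagon
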